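/- Let Ω ⊆ ℝ² be a bounded open connected set and Ω' ⊆ Ω a nonempty open connected subset. Let u be a Poisson solution on Ω and let c be a Poisson solution on Ω'. Then c(x) ≤ u(x) for every x in the closure of Ω'. If moreover Ω' ≠ Ω, then c(x) < u(x) for every x ∈ Ω'. -/

import Mathlib

set_option maxHeartbeats 1600000


open Metric Set Filter
open scoped Matrix RealInnerProductSpace Topology

noncomputable section

/-- The Euclidean plane ℝ². -/
abbrev E2 := EuclideanSpace ℝ (Fin 2)

/-- The Laplacian `c_xx + c_yy` of a function on the plane. -/
noncomputable def lap (c : E2 → ℝ) (p : E2) : ℝ :=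
  ∑ i : Fin 2, fderiv ℝ (fun q => fderiv ℝ c q (EuclideanSpace.single i 1)) p
    (EuclideanSpace.single i 1)

/-- A Poisson solution on a bounded open set `Ω ⊆ ℝ²` (for fixed constants `K, D`):
continuous on the closure of `Ω`, twice continuously differentiable on `Ω`,
satisfying `Δc = -K/D` on `Ω` and `c = 0` on the boundary `∂Ω`. -/
structure IsPoissonSolution (K D : ℝ) (Ω : Set E2) (c : E2 → ℝ) : Prop where
  contOn : ContinuousOn c (closure Ω)
  smooth : ContDiffOn ℝ 2 c Ω
  eqn : ∀ p ∈ Ω, lap c p = -(K / D)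
  bdry : ∀ p ∈ frontier Ω, c p = 0

/-- 1-D second derivative test at a local min. -/
theorem secondDeriv_nonneg_of_isLocalMin {g g' : ℝ → ℝ} {L : ℝ} {η : ℝ} (hη : 0 < η)
    (hg : ∀ t ∈ Set.Ioo (-η) η, HasDerivAt g (g' t) t)
    (hg' : HasDerivAt g' L 0) (hmin : IsLocalMin g 0) : 0 ≤ L := by
  have h0 : g' 0 = 0 := hmin.hasDerivAt_eq_zero (hg 0 ⟨by linarith, hη⟩)
  obtain ⟨ε, hε, hmin'⟩ := Metric.mem_nhds_iff.1 hmin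
  have key : ∀ t : ℝ, 0 < t → t < min η ε → ∃ ξ, ξ ∈ Set.Ioo 0 t ∧ 0 ≤ g' ξ := by
    intro t ht htm
    have htη : t < η := lt_of_lt_of_le htm (min_le_left _ _)
    have hderiv : ∀ x ∈ Set.Ioo (0:ℝ) t, HasDerivAt g (g' x) x := fun x hx =>
      hg x ⟨by linarith [hx.1], by linarith [hx.2]⟩
    have hcont : ContinuousOn g (Set.Icc 0 t) := fun x hx =>
      ((hg x ⟨by linarith [hx.1], by linarith [hx.2]⟩).continuousAt).continuousWithinAt
    obtain ⟨ξ, hξ, hval⟩ := exists_hasDerivAt_eq_slope g g' ht hcont hderiv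
    refine ⟨ξ, hξ, ?_⟩
    rw [hval]
    have hgt : g 0 ≤ g t := by
      apply hmin'
      simp only [Metric.mem_ball, Real.dist_eq, sub_zero]
      rw [abs_of_pos ht]; exact lt_of_lt_of_le htm (min_le_right _ _)
    apply div_nonneg (by linarith) (by linarith)
  set δ := min η ε with hδ
  have hδ0 : 0 < δ := lt_min hη hε
  choose ξ hξ using fun n : ℕ => key (δ / (n + 2)) (by positivity)
    (by
      rw [div_lt_iff₀ (by positivity)]
      nlinarith [hδ0])
  have hξ0 : ∀ n, 0 < ξ n := fun n => (hξ n).1.1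
  have hξlt : ∀ n, ξ n < δ / (n + 2) := fun n => (hξ n).1.2
  have hbound : Filter.Tendsto (fun n : ℕ => δ / ((n : ℝ) + 2)) Filter.atTop (𝓝 0) :=
    Filter.Tendsto.div_atTop tendsto_const_nhds
      (Filter.tendsto_atTop_add_const_right _ 2 tendsto_natCast_atTop_atTop)
  have hξtend : Filter.Tendsto ξ Filter.atTop (𝓝[≠] 0) := by
    rw [tendsto_nhdsWithin_iff]
    exact ⟨squeeze_zero (fun n => (hξ0 n).le) (fun n => (hξlt n).le) hbound,
      Filter.Eventually.of_forall fun n => (hξ0 n).ne'⟩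
  have hslope : Filter.Tendsto (slope g' 0) (𝓝[≠] 0) (𝓝 L) :=
    hasDerivAt_iff_tendsto_slope.1 hg'
  have : Filter.Tendsto (fun n => slope g' 0 (ξ n)) Filter.atTop (𝓝 L) :=
    hslope.comp hξtend
  refine ge_of_tendsto this (Filter.Eventually.of_forall fun n => ?_)
  have h1 := (hξ n).2
  have h2 := hξ0 n
  simp only [slope_def_field, h0, sub_zero, div_eq_inv_mul]
  positivity


theorem lap_nonneg_of_isLocalMin {U : Set E2} (hU : IsOpen U) {f : E2 → ℝ}
    (hf : ContDiffOn ℝ 2 f U) {p : E2} (hp : p ∈ U) (hmin : IsLocalMin f p) :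
    0 ≤ lap f p := by
  have hf1 : ContDiffOn ℝ 1 (fderiv ℝ f) U :=
    hf.fderiv_of_isOpen hU (by norm_num)
  have hfd : ∀ q ∈ U, HasFDerivAt f (fderiv ℝ f q) q := fun q hq =>
    ((hf.differentiableOn (by norm_num) q hq).differentiableAt
      (hU.mem_nhds hq)).hasFDerivAt
  have hderivd : DifferentiableAt ℝ (fderiv ℝ f) p :=
    (hf1.differentiableOn one_ne_zero p hp).differentiableAt (hU.mem_nhds hp)
  obtain ⟨η, hη, hball⟩ := Metric.isOpen_iff.1 hU p hp
  apply Finset.sum_nonneg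
  intro i _
  set e : E2 := EuclideanSpace.single i 1 with he
  have hne : ‖e‖ = 1 := by simp [he, EuclideanSpace.norm_single]
  set ℓ : ℝ → E2 := fun t => p + t • e with hℓ
  have hℓ0 : ℓ 0 = p := by simp [hℓ]
  have hℓmem : ∀ t ∈ Set.Ioo (-η) η, ℓ t ∈ U := by
    intro t ht
    apply hball
    simp only [Metric.mem_ball, hℓ, dist_eq_norm, add_sub_cancel_left, norm_smul, hne,
      Real.norm_eq_abs, mul_one]
    exact abs_lt.2 ⟨ht.1, ht.2⟩
  have hℓd : ∀ t : ℝ, HasDerivAt ℓ e t := by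
    intro t
    have : HasDerivAt (fun s : ℝ => s • e) ((1:ℝ) • e) t := (hasDerivAt_id t).smul_const e
    simpa [hℓ, one_smul] using this.const_add p
  set φ : E2 → ℝ := fun q => fderiv ℝ f q e with hφ
  have hφd : DifferentiableAt ℝ φ p := by
    exact (ContinuousLinearMap.apply ℝ ℝ e).differentiableAt.comp p hderivd
  have hg : ∀ t ∈ Set.Ioo (-η) η, HasDerivAt (fun s => f (ℓ s)) (φ (ℓ t)) t := by
    intro t ht
    exact (hfd _ (hℓmem t ht)).comp_hasDerivAt t (hℓd t)
  have hg' : HasDerivAt (fun t => φ (ℓ t)) (fderiv ℝ φ p e) 0 := by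
    have h1 : HasFDerivAt φ (fderiv ℝ φ p) (ℓ 0) := hℓ0 ▸ hφd.hasFDerivAt
    exact h1.comp_hasDerivAt 0 (hℓd 0)
  have hmin' : IsLocalMin (fun s => f (ℓ s)) 0 := by
    have hcont : Continuous ℓ := by
      apply Continuous.add continuous_const
      exact continuous_id.smul continuous_const
    have htend : Filter.Tendsto ℓ (𝓝 0) (𝓝 p) := by
      rw [← hℓ0]; exact hcont.tendsto 0
    have h2 : IsMinFilter f (𝓝 p) (ℓ 0) := by rw [hℓ0]; exact hmin
    have h3 := h2.comp_tendsto htend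
    simpa [IsLocalMin, IsMinFilter, hℓ0] using h3
  have key : 0 ≤ fderiv ℝ φ p e := secondDeriv_nonneg_of_isLocalMin hη hg hg' hmin'
  exact key


/-- Generic computation of `lap` from explicit first and second derivatives. -/
theorem lap_eq_sum {f : E2 → ℝ} {p : E2} {V : Set E2} (hV : IsOpen V) (hp : p ∈ V)
    {Φ : E2 → E2 →L[ℝ] ℝ} (hΦ : ∀ q ∈ V, HasFDerivAt f (Φ q) q)
    {Ψ : Fin 2 → E2 →L[ℝ] ℝ}
    (hΨ : ∀ i, HasFDerivAt (fun q => Φ q (EuclideanSpace.single i 1)) (Ψ i) p) :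
    lap f p = ∑ i : Fin 2, Ψ i (EuclideanSpace.single i 1) := by
  unfold lap
  congr 1
  funext i
  set e : E2 := EuclideanSpace.single i 1
  have h1 : (fun q => fderiv ℝ f q e) =ᶠ[𝓝 p] (fun q => Φ q e) := by
    filter_upwards [hV.mem_nhds hp] with q hq
    rw [(hΦ q hq).fderiv]
  rw [h1.fderiv_eq, (hΨ i).fderiv]

/-- lap of a difference. -/
theorem lap_sub {U : Set E2} (hU : IsOpen U) {f g : E2 → ℝ}
    (hf : ContDiffOn ℝ 2 f U) (hg : ContDiffOn ℝ 2 g U) {p : E2} (hp : p ∈ U) :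
    lap (fun x => f x - g x) p = lap f p - lap g p := by
  have hfd : ∀ q ∈ U, DifferentiableAt ℝ f q := fun q hq =>
    (hf.differentiableOn (by norm_num) q hq).differentiableAt (hU.mem_nhds hq)
  have hgd : ∀ q ∈ U, DifferentiableAt ℝ g q := fun q hq =>
    (hg.differentiableOn (by norm_num) q hq).differentiableAt (hU.mem_nhds hq)
  have hf1 : DifferentiableAt ℝ (fderiv ℝ f) p :=
    ((hf.fderiv_of_isOpen hU (by norm_num) : ContDiffOn ℝ 1 (fderiv ℝ f) U).differentiableOn
      one_ne_zero p hp).differentiableAt (hU.mem_nhds hp)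
  have hg1 : DifferentiableAt ℝ (fderiv ℝ g) p :=
    ((hg.fderiv_of_isOpen hU (by norm_num) : ContDiffOn ℝ 1 (fderiv ℝ g) U).differentiableOn
      one_ne_zero p hp).differentiableAt (hU.mem_nhds hp)
  unfold lap
  rw [← Finset.sum_sub_distrib]
  congr 1
  funext i
  set e : E2 := EuclideanSpace.single i 1
  have h1 : (fun q => fderiv ℝ (fun x => f x - g x) q e) =ᶠ[𝓝 p]
      (fun q => fderiv ℝ f q e - fderiv ℝ g q e) := by
    filter_upwards [hU.mem_nhds hp] with q hq
    rw [fderiv_fun_sub (hfd q hq) (hgd q hq)]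
    rfl
  rw [h1.fderiv_eq]
  have hφf : DifferentiableAt ℝ (fun q => fderiv ℝ f q e) p :=
    (ContinuousLinearMap.apply ℝ ℝ e).differentiableAt.comp p hf1
  have hφg : DifferentiableAt ℝ (fun q => fderiv ℝ g q e) p :=
    (ContinuousLinearMap.apply ℝ ℝ e).differentiableAt.comp p hg1
  rw [fderiv_fun_sub hφf hφg]
  rfl


section barrier
variable (cpt : E2)

/-- shifted square-distance function -/
def Sq (cpt : E2) : E2 → ℝ := fun x => ∑ i : Fin 2, (x i - cpt i)^2

theorem proj_apply' (i : Fin 2) (x : E2) : EuclideanSpace.proj (𝕜 := ℝ) i x = x i := rfl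

theorem Sq_eq_dist (x : E2) : Sq cpt x = dist x cpt ^ 2 := by
  rw [EuclideanSpace.dist_eq, Real.sq_sqrt]
  · simp [Sq, Real.dist_eq, sq_abs]
  · positivity

theorem Sq_contDiff : ContDiff ℝ 2 (Sq cpt) := by
  apply ContDiff.sum
  intro i _
  have h : ContDiff ℝ 2 (fun x : E2 => x i - cpt i) :=
    (EuclideanSpace.proj (𝕜 := ℝ) i).contDiff.sub contDiff_const
  exact h.pow 2

noncomputable def SqD (cpt : E2) : E2 → E2 →L[ℝ] ℝ := fun q =>
  ∑ i : Fin 2, (2 * (q i - cpt i)) • (EuclideanSpace.proj (𝕜 := ℝ) i)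

theorem Sq_hasFDerivAt (q : E2) : HasFDerivAt (Sq cpt) (SqD cpt q) q := by
  apply HasFDerivAt.fun_sum
  intro i _
  have h : HasFDerivAt (fun x : E2 => x i - cpt i) (EuclideanSpace.proj (𝕜 := ℝ) i) q :=
    (EuclideanSpace.proj (𝕜 := ℝ) i).hasFDerivAt.sub_const (cpt i)
  have h2 := h.mul h
  have : (2 * (q i - cpt i)) • (EuclideanSpace.proj (𝕜 := ℝ) i) =
      (q i - cpt i) • (EuclideanSpace.proj (𝕜 := ℝ) i) +
      (q i - cpt i) • (EuclideanSpace.proj (𝕜 := ℝ) i) := by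
    rw [two_mul, add_smul]
  rw [this]
  simpa [pow_two, Pi.mul_def] using h2

theorem SqD_apply (q : E2) (j : Fin 2) :
    SqD cpt q (EuclideanSpace.single j 1) = 2 * (q j - cpt j) := by
  simp only [SqD, ContinuousLinearMap.sum_apply, ContinuousLinearMap.smul_apply,
    proj_apply', EuclideanSpace.single_apply, smul_eq_mul, mul_ite, mul_one, mul_zero]
  simp [Finset.sum_ite_eq]

theorem lap_Sq (p : E2) : lap (Sq cpt) p = 4 := by
  have := lap_eq_sum isOpen_univ (mem_univ p) (fun q _ => Sq_hasFDerivAt cpt q)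
    (Ψ := fun j => (2:ℝ) • (EuclideanSpace.proj (𝕜 := ℝ) j)) ?_
  · rw [this]
    simp only [ContinuousLinearMap.smul_apply, proj_apply', EuclideanSpace.single_apply,
      smul_eq_mul, Fin.sum_univ_two]
    norm_num
  · intro j
    have h : HasFDerivAt (fun q : E2 => 2 * (q j - cpt j))
        ((2:ℝ) • (EuclideanSpace.proj (𝕜 := ℝ) j)) p := by
      have h0 : HasFDerivAt (fun x : E2 => x j - cpt j) (EuclideanSpace.proj (𝕜 := ℝ) j) p :=
        (EuclideanSpace.proj (𝕜 := ℝ) j).hasFDerivAt.sub_const (cpt j)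
      simpa using h0.const_mul (2:ℝ)
    apply h.congr_of_eventuallyEq
    filter_upwards with q
    rw [SqD_apply]
end barrier

section gauss
variable (ε α κ : ℝ) (cpt : E2)

noncomputable def Gb : E2 → ℝ := fun x => ε * (Real.exp (-α * Sq cpt x) - κ)

theorem Gb_contDiff : ContDiff ℝ 2 (Gb ε α κ cpt) := by
  apply ContDiff.mul contDiff_const
  apply ContDiff.sub _ contDiff_const
  exact Real.contDiff_exp.comp (contDiff_const.mul (Sq_contDiff cpt))

noncomputable def GbD : E2 → E2 →L[ℝ] ℝ := fun q =>
  (ε * Real.exp (-α * Sq cpt q) * (-α)) • SqD cpt q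

theorem Gb_hasFDerivAt (q : E2) : HasFDerivAt (Gb ε α κ cpt) (GbD ε α cpt q) q := by
  have h1 : HasFDerivAt (fun x : E2 => -α * Sq cpt x) ((-α) • SqD cpt q) q :=
    (Sq_hasFDerivAt cpt q).const_mul (-α)
  have h2 := h1.exp
  have h3 := (h2.sub_const κ).const_mul ε
  have : ε • (Real.exp (-α * Sq cpt q) • ((-α) • SqD cpt q)) = GbD ε α cpt q := by
    rw [smul_smul, smul_smul, GbD, mul_assoc]
  rw [← this]
  exact h3

theorem lap_Gb (p : E2) :
    lap (Gb ε α κ cpt) p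
      = Real.exp (-α * Sq cpt p) * ε * (4*α^2 * Sq cpt p - 4*α) := by
  set A : E2 → ℝ := fun q => Real.exp (-α * Sq cpt q) with hA
  have hAd : ∀ q : E2, HasFDerivAt A (A q • ((-α) • SqD cpt q)) q := fun q =>
    ((Sq_hasFDerivAt cpt q).const_mul (-α)).exp
  have key := lap_eq_sum isOpen_univ (mem_univ p)
    (fun q _ => Gb_hasFDerivAt ε α κ cpt q)
    (Ψ := fun j => (ε * (-α) * 2) •
      (A p • (EuclideanSpace.proj (𝕜 := ℝ) j) +
        (p j - cpt j) • (A p • ((-α) • SqD cpt p)))) ?_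
  · rw [key]
    simp only [ContinuousLinearMap.smul_apply, ContinuousLinearMap.add_apply,
      proj_apply', EuclideanSpace.single_apply, smul_eq_mul, SqD_apply,
      Fin.sum_univ_two, hA, if_true]
    have hSq : Sq cpt p = (p 0 - cpt 0)^2 + (p 1 - cpt 1)^2 := by
      simp [Sq, Fin.sum_univ_two]
    set Ea := Real.exp (-α * Sq cpt p) with hEa
    rw [hSq]
    ring
  · intro j
    have hB : HasFDerivAt (fun q : E2 => q j - cpt j) (EuclideanSpace.proj (𝕜 := ℝ) j) p :=
      (EuclideanSpace.proj (𝕜 := ℝ) j).hasFDerivAt.sub_const (cpt j)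
    have hAB := (hAd p).mul hB
    have hfin := hAB.const_mul (ε * (-α) * 2)
    apply hfin.congr_of_eventuallyEq
    filter_upwards with q
    rw [GbD, ContinuousLinearMap.smul_apply, SqD_apply]
    simp only [smul_eq_mul, hA, Pi.mul_apply]
    ring
end gauss


/-- The minimum of a strictly superharmonic function is attained on the frontier. -/
theorem exists_frontier_le {U : Set E2} (hU : IsOpen U) (hUb : Bornology.IsBounded U)
    {f : E2 → ℝ} (hfc : ContinuousOn f (closure U)) (hf2 : ContDiffOn ℝ 2 f U)
    (hlap : ∀ p ∈ U, lap f p < 0) {x : E2} (hx : x ∈ closure U) :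
    ∃ y ∈ frontier U, f y ≤ f x := by
  have hK : IsCompact (closure U) :=
    Metric.isCompact_of_isClosed_isBounded isClosed_closure hUb.closure
  obtain ⟨m, hm, hmin⟩ := hK.exists_isMinOn ⟨x, hx⟩ hfc
  have hmU : m ∉ U := by
    intro hmU
    have hloc : IsLocalMin f m :=
      hmin.isLocalMin (Filter.mem_of_superset (hU.mem_nhds hmU) subset_closure)
    exact absurd (lap_nonneg_of_isLocalMin hU hf2 hmU hloc) (not_le.2 (hlap m hmU))
  exact ⟨m, by rw [frontier, hU.interior_eq]; exact ⟨hm, hmU⟩, hmin hx⟩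

/-- Comparison: strictly superharmonic, nonneg on frontier, so nonneg inside. -/
theorem nonneg_of_superharmonic {U : Set E2} (hU : IsOpen U) (hUb : Bornology.IsBounded U)
    {f : E2 → ℝ} (hfc : ContinuousOn f (closure U)) (hf2 : ContDiffOn ℝ 2 f U)
    (hlap : ∀ p ∈ U, lap f p < 0) (hbd : ∀ y ∈ frontier U, 0 ≤ f y) :
    ∀ x ∈ closure U, 0 ≤ f x := by
  intro x hx
  obtain ⟨y, hy, hle⟩ := exists_frontier_le hU hUb hfc hf2 hlap hx
  exact le_trans (hbd y hy) hle


theorem lap_Sqs (ε κ : ℝ) (cpt p : E2) :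
    lap (fun x => ε * (Sq cpt x - κ)) p = 4 * ε := by
  have key := lap_eq_sum isOpen_univ (mem_univ p)
    (Φ := fun q => ε • SqD cpt q)
    (fun q _ => ((Sq_hasFDerivAt cpt q).sub_const κ).const_mul ε)
    (Ψ := fun j => (ε * 2) • (EuclideanSpace.proj (𝕜 := ℝ) j)) ?_
  · rw [key]
    simp only [ContinuousLinearMap.smul_apply, proj_apply', EuclideanSpace.single_apply,
      smul_eq_mul, Fin.sum_univ_two, if_true]
    ring
  · intro j
    have h0 : HasFDerivAt (fun x : E2 => x j - cpt j) (EuclideanSpace.proj (𝕜 := ℝ) j) p :=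
      (EuclideanSpace.proj (𝕜 := ℝ) j).hasFDerivAt.sub_const (cpt j)
    have h1 := h0.const_mul (ε * 2)
    apply h1.congr_of_eventuallyEq
    filter_upwards with q
    rw [ContinuousLinearMap.smul_apply, SqD_apply]
    simp only [smul_eq_mul]
    ring

/-- Weak minimum principle for harmonic functions. -/
theorem nonneg_of_harmonic {U : Set E2} (hU : IsOpen U) (hUb : Bornology.IsBounded U)
    {w : E2 → ℝ} (hwc : ContinuousOn w (closure U)) (hw2 : ContDiffOn ℝ 2 w U)
    (hlap : ∀ p ∈ U, lap w p = 0) (hbd : ∀ y ∈ frontier U, 0 ≤ w y) :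
    ∀ x ∈ closure U, 0 ≤ w x := by
  intro x hx
  obtain ⟨R, hR⟩ := hUb.subset_closedBall 0
  have hRc : closure U ⊆ closedBall 0 R := closure_minimal hR isClosed_closedBall
  have key : ∀ ε > 0, 0 ≤ w x + ε * R ^ 2 := by
    intro ε hε
    set g : E2 → ℝ := fun y => ε * (Sq 0 y - R ^ 2) with hg
    have hgc : ContDiff ℝ 2 g := by
      exact contDiff_const.mul ((Sq_contDiff 0).sub contDiff_const)
    have h1 : ∀ q ∈ U, lap (fun y => w y - g y) q < 0 := by
      intro q hq
      rw [lap_sub hU hw2 hgc.contDiffOn hq, hlap q hq, hg, lap_Sqs]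
      linarith
    have h2 : ∀ y ∈ frontier U, 0 ≤ w y - g y := by
      intro y hy
      have hyc : y ∈ closure U := frontier_subset_closure hy
      have hyR : dist y 0 ≤ R := hRc hyc
      have hR0 : (0:ℝ) ≤ R := le_trans dist_nonneg hyR
      have : Sq 0 y ≤ R ^ 2 := by
        rw [Sq_eq_dist]
        exact pow_le_pow_left₀ dist_nonneg hyR 2
      have := hbd y hy
      simp only [hg]
      nlinarith
    have h3 := nonneg_of_superharmonic hU hUb
      (hwc.sub (hgc.continuous.continuousOn)) (hw2.sub hgc.contDiffOn) h1 h2 x hx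
    have h4 : 0 ≤ Sq 0 x := by rw [Sq_eq_dist]; positivity
    simp only [hg, Pi.sub_apply] at h3
    nlinarith
  by_contra hneg
  push_neg at hneg
  set ε : ℝ := -(w x) / (2 * R ^ 2 + 1) with hεdef
  have hε : 0 < ε := div_pos (by linarith) (by positivity)
  have hkey := key ε hε
  have h6 : ε * (2 * R ^ 2 + 1) = -(w x) := by
    rw [hεdef]; field_simp
  nlinarith [sq_nonneg R, mul_pos hε hε]


theorem hopf_core {U : Set E2} (hU : IsOpen U) {w : E2 → ℝ}
    (hw2 : ContDiffOn ℝ 2 w U) (hlap : ∀ q ∈ U, lap w q = 0)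
    (hnn : ∀ x ∈ U, 0 ≤ w x) {p z : E2} {r : ℝ} (hr : 0 < r)
    (hball : closedBall p (2*r) ⊆ U) (hpos : ∀ x ∈ ball p r, 0 < w x)
    (hz : dist z p = r) (hwz : w z = 0) : False := by
  -- the annulus
  set A : Set E2 := {x | r/2 < dist x p} ∩ {x | dist x p < r} with hA
  have hAopen : IsOpen A :=
    (isOpen_lt continuous_const (continuous_id.dist continuous_const)).inter
      (isOpen_lt (continuous_id.dist continuous_const) continuous_const)
  have hAsub : A ⊆ U := fun x hx => hball (by
    simp only [mem_closedBall]
    have := hx.2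
    simp only [mem_setOf_eq] at this
    linarith)
  have hAbd : Bornology.IsBounded A :=
    (Metric.isBounded_ball (x := p) (r := r)).subset (fun x hx => hx.2)
  have hCA : closure A ⊆ {x | r/2 ≤ dist x p} ∩ {x | dist x p ≤ r} := by
    apply closure_minimal
    · rintro x ⟨hx1, hx2⟩
      simp only [mem_inter_iff, mem_setOf_eq] at *
      exact ⟨hx1.le, hx2.le⟩
    · exact (isClosed_le continuous_const (continuous_id.dist continuous_const)).inter
        (isClosed_le (continuous_id.dist continuous_const) continuous_const)
  have hclosU : closure A ⊆ U := fun x hx => hball (by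
    simp only [mem_closedBall]
    have := (hCA hx).2
    simp only [mem_setOf_eq] at this
    linarith)
  -- minimum on the inner sphere
  have hsphU : sphere p (r/2) ⊆ ball p r := fun x hx => by
    simp only [mem_sphere] at hx
    simp only [mem_ball, hx]
    linarith
  have hsphne : (sphere p (r/2)).Nonempty :=
    NormedSpace.sphere_nonempty.2 (by positivity)
  have hwcontU : ContinuousOn w U := hw2.continuousOn
  obtain ⟨y0, hy0, hy0min⟩ := (isCompact_sphere p (r/2)).exists_isMinOn hsphne
    (hwcontU.mono (fun x hx => hball (by
      simp only [mem_sphere] at hx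
      simp only [mem_closedBall, hx]
      linarith)))
  set m : ℝ := w y0 with hm
  have hm0 : 0 < m := hpos y0 (hsphU hy0)
  -- barrier parameters
  set α : ℝ := 8 / r^2 with hα
  have hα0 : 0 < α := by positivity
  have hαr : α * r^2 = 8 := by
    rw [hα]; field_simp
  set κ : ℝ := Real.exp (-α * r^2) with hκ
  have hκ0 : 0 < κ := Real.exp_pos _
  set v : E2 → ℝ := fun x => w x - Gb m α κ p x with hv
  -- v is strictly superharmonic on A
  have hlapv : ∀ q ∈ A, lap v q < 0 := by
    intro q hq
    rw [hv, lap_sub hAopen (hw2.mono hAsub) (Gb_contDiff m α κ p).contDiffOn hq,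
      hlap q (hAsub hq), lap_Gb]
    have hd : r/2 < dist q p := hq.1
    have hSq : r^2/4 < Sq p q := by
      rw [Sq_eq_dist]
      nlinarith [dist_nonneg (x := q) (y := p)]
    have hexp : 0 < Real.exp (-α * Sq p q) := Real.exp_pos _
    have h1 : 2 < α * Sq p q := by
      have : α * (r^2/4) < α * Sq p q := by
        exact mul_lt_mul_of_pos_left hSq hα0
      nlinarith
    have h2 : 0 < 4*α^2 * Sq p q - 4*α := by nlinarith
    nlinarith [mul_pos (mul_pos hexp hm0) h2]
  -- boundary values of v
  have hbdry : ∀ y ∈ frontier A, 0 ≤ v y := by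
    intro y hy
    have hyc : y ∈ closure A := frontier_subset_closure hy
    have hyn : y ∉ A := by
      rw [frontier, hAopen.interior_eq] at hy; exact hy.2
    have h1 := (hCA hyc).1
    have h2 := (hCA hyc).2
    simp only [mem_setOf_eq] at h1 h2
    have hcases : dist y p = r/2 ∨ dist y p = r := by
      rcases eq_or_lt_of_le h1 with h | h
      · left; exact h.symm
      rcases eq_or_lt_of_le h2 with h' | h'
      · right; exact h'
      · exact absurd ⟨h, h'⟩ hyn
    have hyU : y ∈ U := hclosU hyc
    rcases hcases with hcase | hcase
    · -- inner sphere: w ≥ m ≥ Gb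
      have hwy : m ≤ w y := hy0min (show y ∈ sphere p (r/2) from by
        rw [mem_sphere]; exact hcase)
      have hSqy : Sq p y = r^2/4 := by
        rw [Sq_eq_dist, hcase]; ring
      have hexp1 : Real.exp (-α * Sq p y) ≤ 1 := by
        rw [Real.exp_le_one_iff, hSqy]
        nlinarith
      have : Gb m α κ p y ≤ m := by
        rw [Gb]
        nlinarith
      simp only [hv]
      linarith
    · -- outer sphere: Gb = 0
      have hSqy : Sq p y = r^2 := by
        rw [Sq_eq_dist, hcase]
      have : Gb m α κ p y = 0 := by
        rw [Gb, hSqy, hκ]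
        ring
      simp only [hv, this]
      have := hnn y hyU
      linarith
  -- comparison on the annulus
  have hvcont : ContinuousOn v (closure A) :=
    (hwcontU.mono hclosU).sub (Gb_contDiff m α κ p).continuous.continuousOn
  have hv2 : ContDiffOn ℝ 2 v A :=
    (hw2.mono hAsub).sub (Gb_contDiff m α κ p).contDiffOn
  have hcomp := nonneg_of_superharmonic hAopen hAbd hvcont hv2 hlapv hbdry
  -- z is an interior local min of w
  have hzU : z ∈ U := hball (by simp only [mem_closedBall, hz]; linarith)
  have hzmin : IsLocalMin w z := by
    filter_upwards [hU.mem_nhds hzU] with q hq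
    rw [hwz]; exact hnn q hq
  have hwdiff : DifferentiableAt ℝ w z :=
    (hw2.differentiableOn (by norm_num) z hzU).differentiableAt (hU.mem_nhds hzU)
  -- line from z to p
  set d : E2 := p - z with hd
  set ℓ : ℝ → E2 := fun t => z + t • d with hℓ
  have hℓ0 : ℓ 0 = z := by simp [hℓ]
  have hℓd : ∀ t : ℝ, HasDerivAt ℓ d t := by
    intro t
    have : HasDerivAt (fun s : ℝ => s • d) ((1:ℝ) • d) t := (hasDerivAt_id t).smul_const d
    simpa [hℓ, one_smul] using this.const_add z
  set g : ℝ → ℝ := fun t => w (ℓ t) with hg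
  have hgd : HasDerivAt g (fderiv ℝ w z (d)) 0 := by
    have h1 : HasFDerivAt w (fderiv ℝ w z) (ℓ 0) := hℓ0 ▸ hwdiff.hasFDerivAt
    exact h1.comp_hasDerivAt 0 (hℓd 0)
  have hgmin : IsLocalMin g 0 := by
    have hcont : Continuous ℓ := by
      apply Continuous.add continuous_const
      exact continuous_id.smul continuous_const
    have htend : Filter.Tendsto ℓ (𝓝 0) (𝓝 z) := by
      rw [← hℓ0]; exact hcont.tendsto 0
    have h2 : IsMinFilter w (𝓝 z) (ℓ 0) := by rw [hℓ0]; exact hzmin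
    have h3 := h2.comp_tendsto htend
    simpa [IsLocalMin, IsMinFilter, hg, hℓ0] using h3
  have hg0 : fderiv ℝ w z d = 0 := hgmin.hasDerivAt_eq_zero hgd
  -- derivative of the barrier along the line
  set ψ : ℝ → ℝ := fun t => Gb m α κ p (ℓ t) with hψ
  set L : ℝ := GbD m α p z d with hL
  have hψd : HasDerivAt ψ L 0 := by
    have h1 : HasFDerivAt (Gb m α κ p) (GbD m α p z) (ℓ 0) :=
      hℓ0 ▸ Gb_hasFDerivAt m α κ p z
    exact h1.comp_hasDerivAt 0 (hℓd 0)
  have hSqz : Sq p z = r^2 := by rw [Sq_eq_dist, hz]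
  have hLval : L = 2 * α * r^2 * m * κ := by
    rw [hL, GbD, hSqz, hκ]
    simp only [ContinuousLinearMap.smul_apply, smul_eq_mul]
    have hSqDval : SqD p z d = -(2 * r^2) := by
      have hdi : ∀ i : Fin 2, d i = p i - z i := by
        intro i; rw [hd]; rfl
      have hSqz' : (z 0 - p 0)^2 + (z 1 - p 1)^2 = r^2 := by
        have : Sq p z = (z 0 - p 0)^2 + (z 1 - p 1)^2 := by
          simp [Sq, Fin.sum_univ_two]
        linarith [hSqz, this]
      simp only [SqD, Fin.sum_univ_two, ContinuousLinearMap.add_apply,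
        ContinuousLinearMap.smul_apply, proj_apply', smul_eq_mul, hdi]
      linear_combination (-2 : ℝ) * hSqz'
    rw [hSqDval]
    ring
  have hLpos : 0 < L := by
    rw [hLval]
    positivity
  -- points on the segment are in the closure of A
  have hseg : ∀ t ∈ Ioo (0:ℝ) (1/2 : ℝ), ψ t ≤ g t := by
    intro t ht
    have hdist : dist (ℓ t) p = (1 - t) * r := by
      have heq : ℓ t - p = (1 - t) • (z - p) := by
        simp only [hℓ, hd]
        rw [sub_smul, one_smul, smul_sub, smul_sub]
        abel
      rw [dist_eq_norm, heq, norm_smul, Real.norm_eq_abs,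
        abs_of_pos (by linarith [ht.2] : (0:ℝ) < 1 - t), ← dist_eq_norm, hz]
    have hmem : ℓ t ∈ A := by
      have h1 : r/2 < dist (ℓ t) p := by rw [hdist]; nlinarith [ht.1, ht.2, hr]
      have h2 : dist (ℓ t) p < r := by rw [hdist]; nlinarith [ht.1, hr]
      exact ⟨h1, h2⟩
    have := hcomp (ℓ t) (subset_closure hmem)
    simp only [hv] at this
    simp only [hψ, hg]
    linarith
  have hψ0 : ψ 0 = 0 := by
    simp only [hψ, hℓ0, Gb, hSqz, hκ]
    ring
  have hg0' : g 0 = 0 := by simp only [hg, hℓ0, hwz]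
  -- compare limits of slopes
  have hslopeg : Filter.Tendsto (slope g 0) (𝓝[>] 0) (𝓝 0) := by
    have := hasDerivAt_iff_tendsto_slope.1 hgd
    rw [hg0] at this
    exact this.mono_left (nhdsWithin_mono 0 (fun t ht => ne_of_gt ht))
  have hslopeψ : Filter.Tendsto (slope ψ 0) (𝓝[>] 0) (𝓝 L) :=
    (hasDerivAt_iff_tendsto_slope.1 hψd).mono_left
      (nhdsWithin_mono 0 (fun t ht => ne_of_gt ht))
  have hev : slope ψ 0 ≤ᶠ[𝓝[>] (0:ℝ)] slope g 0 := by
    filter_upwards [Ioo_mem_nhdsGT_of_mem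
      (by constructor <;> norm_num : (0:ℝ) ∈ Ico (0:ℝ) (1/2))] with t ht
    have hts := hseg t ht
    have ht0 : 0 < t := ht.1
    simp only [slope_def_field, hψ0, hg0', sub_zero]
    gcongr
  have hLle : L ≤ 0 := le_of_tendsto_of_tendsto hslopeψ hslopeg hev
  linarith [hLle, hLpos]


theorem compl_nonempty_of_isBounded {U : Set E2} (hUb : Bornology.IsBounded U) :
    Uᶜ.Nonempty := by
  by_contra h
  rw [Set.not_nonempty_iff_eq_empty, Set.compl_empty_iff] at h
  subst h
  obtain ⟨R, hR⟩ := hUb.subset_closedBall 0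
  have := hR (Set.mem_univ (EuclideanSpace.single 0 (|R| + 1) : E2))
  simp only [mem_closedBall, dist_zero_right, EuclideanSpace.norm_single] at this
  rw [Real.norm_eq_abs, abs_of_pos (by positivity : (0:ℝ) < |R| + 1)] at this
  linarith [le_abs_self R, abs_nonneg R]

/-- Strong minimum principle for harmonic functions. -/
theorem harmonic_eqzero {U : Set E2} (hU : IsOpen U) (hUb : Bornology.IsBounded U)
    (hUconn : IsPreconnected U) {w : E2 → ℝ} (hw2 : ContDiffOn ℝ 2 w U)
    (hlap : ∀ q ∈ U, lap w q = 0) (hnn : ∀ x ∈ U, 0 ≤ w x)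
    {z0 : E2} (hz0 : z0 ∈ U) (hz0w : w z0 = 0) : ∀ x ∈ U, w x = 0 := by
  have hUc : Uᶜ.Nonempty := compl_nonempty_of_isBounded hUb
  have hwAt : ∀ x ∈ U, ContinuousAt w x := fun x hx =>
    hw2.continuousOn.continuousAt (hU.mem_nhds hx)
  set V : Set E2 := {x | x ∈ U ∧ w x ≠ 0} with hV
  have hVopen : IsOpen V := by
    rw [isOpen_iff_mem_nhds]
    rintro x ⟨hxU, hxw⟩
    filter_upwards [hU.mem_nhds hxU, (hwAt x hxU).eventually_ne hxw] with y h1 h2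
    exact ⟨h1, h2⟩
  set Z : Set E2 := {x | x ∈ U ∧ w x = 0} with hZ
  have hZ'closed : IsClosed Vᶜ := hVopen.isClosed_compl
  have hZopen : IsOpen Z := by
    rw [Metric.isOpen_iff]
    rintro z1 ⟨hz1U, hz1w⟩
    have hz1c : z1 ∉ Uᶜ := fun h => h hz1U
    have hδ0 : 0 < infDist z1 Uᶜ :=
      (IsClosed.notMem_iff_infDist_pos hU.isClosed_compl hUc).1 hz1c
    set δ := infDist z1 Uᶜ with hδ
    have hballδ : ball z1 δ ⊆ U := by
      intro y hy
      by_contra hyU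
      have h2 := infDist_le_dist_of_mem (x := z1) (show y ∈ Uᶜ from hyU)
      rw [mem_ball, dist_comm] at hy
      linarith
    refine ⟨δ/8, by positivity, ?_⟩
    intro p hp
    by_contra hpZ
    have hpU : p ∈ U := hballδ (by
      rw [mem_ball] at hp ⊢
      linarith)
    have hpw : w p ≠ 0 := fun h => hpZ ⟨hpU, h⟩
    have hpV : p ∈ V := ⟨hpU, hpw⟩
    have hZ'ne : Vᶜ.Nonempty := ⟨z1, fun h => h.2 hz1w⟩
    set r := infDist p Vᶜ with hr
    have hr0 : 0 < r := (IsClosed.notMem_iff_infDist_pos hZ'closed hZ'ne).1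
      (by simp only [mem_compl_iff, not_not]; exact hpV)
    have hrle : r ≤ dist p z1 := infDist_le_dist_of_mem (fun h => h.2 hz1w)
    have hpz1 : dist p z1 < δ/8 := by rwa [mem_ball] at hp
    have hcball : closedBall p (2*r) ⊆ U := by
      intro y hy
      rw [mem_closedBall] at hy
      apply hballδ
      rw [mem_ball]
      calc dist y z1 ≤ dist y p + dist p z1 := dist_triangle y p z1
        _ < δ := by linarith
    have hballpos : ∀ x ∈ ball p r, 0 < w x := by
      intro x hx
      rw [mem_ball] at hx
      have hxV : x ∈ V := by
        by_contra hxV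
        have h2 := infDist_le_dist_of_mem (x := p) (show x ∈ Vᶜ from hxV)
        rw [dist_comm] at hx
        linarith
      exact lt_of_le_of_ne (hnn x hxV.1) (Ne.symm hxV.2)
    obtain ⟨z, hzZ', hzdist⟩ := hZ'closed.exists_infDist_eq_dist hZ'ne p
    have hzp : dist z p = r := by rw [dist_comm]; exact hzdist.symm
    have hzU : z ∈ U := by
      apply hballδ
      rw [mem_ball]
      calc dist z z1 ≤ dist z p + dist p z1 := dist_triangle z p z1
        _ < δ := by rw [hzp]; linarith
    have hzw : w z = 0 := by
      by_contra hzw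
      exact hzZ' ⟨hzU, hzw⟩
    exact hopf_core hU hw2 hlap hnn hr0 hcball hballpos hzp hzw
  -- connectedness
  intro x hx
  by_contra hxw
  obtain ⟨y, hy⟩ := hUconn Z V hZopen hVopen
    (fun q hq => by
      by_cases h : w q = 0
      · exact Or.inl ⟨hq, h⟩
      · exact Or.inr ⟨hq, h⟩)
    ⟨z0, hz0, hz0, hz0w⟩ ⟨x, hx, hx, hxw⟩
  exact hy.2.2.2 hy.2.1.2


/-- Containment Lemma: If `u` is a Poisson solution on a bounded open
connected `Ω` and `c` is a Poisson solution on a nonempty open connected subset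
`Ω' ⊆ Ω`, then `c ≤ u` on the closure of `Ω'`; if moreover `Ω' ≠ Ω`, then `c < u`
everywhere on `Ω'`. -/
theorem poisson_containment (K D : ℝ) (hK : 0 < K) (hD : 0 < D)
    (Ω Ω' : Set E2) (hΩ : IsOpen Ω) (hΩb : Bornology.IsBounded Ω)
    (hΩconn : IsConnected Ω) (hΩ' : IsOpen Ω') (hΩ'ne : Ω'.Nonempty)
    (hΩ'conn : IsConnected Ω') (hsub : Ω' ⊆ Ω)
    (u : E2 → ℝ) (hu : IsPoissonSolution K D Ω u)
    (c : E2 → ℝ) (hc : IsPoissonSolution K D Ω' c) :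
    (∀ x ∈ closure Ω', c x ≤ u x) ∧ (Ω' ≠ Ω → ∀ x ∈ Ω', c x < u x) := by
  have hKD : 0 < K / D := div_pos hK hD
  have hulap : ∀ p ∈ Ω, lap u p < 0 := fun p hp => by
    rw [hu.eqn p hp]; linarith
  -- u ≥ 0 on closure Ω
  have hu0 : ∀ x ∈ closure Ω, 0 ≤ u x := by
    intro x hx
    obtain ⟨y, hy, hle⟩ := exists_frontier_le hΩ hΩb hu.contOn hu.smooth hulap hx
    rw [hu.bdry y hy] at hle
    exact hle
  -- u > 0 on Ω
  have hupos : ∀ x ∈ Ω, 0 < u x := by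
    intro x hx
    rcases lt_or_eq_of_le (hu0 x (subset_closure hx)) with h | h
    · exact h
    · exfalso
      have hloc : IsLocalMin u x := by
        filter_upwards [hΩ.mem_nhds hx] with q hq
        rw [← h]; exact hu0 q (subset_closure hq)
      have := lap_nonneg_of_isLocalMin hΩ hu.smooth hx hloc
      linarith [hulap x hx]
  -- the difference w = u - c is harmonic on Ω'
  have hΩ'b : Bornology.IsBounded Ω' := hΩb.subset hsub
  have hclsub : closure Ω' ⊆ closure Ω := closure_mono hsub
  set w : E2 → ℝ := fun x => u x - c x with hw
  have husm : ContDiffOn ℝ 2 u Ω' := hu.smooth.mono hsub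
  have hw2 : ContDiffOn ℝ 2 w Ω' := husm.sub hc.smooth
  have hwlap : ∀ p ∈ Ω', lap w p = 0 := by
    intro p hp
    rw [hw, lap_sub hΩ' husm hc.smooth hp, hu.eqn p (hsub hp), hc.eqn p hp]
    ring
  have hwcont : ContinuousOn w (closure Ω') :=
    (hu.contOn.mono hclsub).sub hc.contOn
  have hwbd : ∀ y ∈ frontier Ω', 0 ≤ w y := by
    intro y hy
    have hyc : y ∈ closure Ω' := frontier_subset_closure hy
    rw [hw]
    simp only
    rw [hc.bdry y hy, sub_zero]
    exact hu0 y (hclsub hyc)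
  have hwnn : ∀ x ∈ closure Ω', 0 ≤ w x :=
    nonneg_of_harmonic hΩ' hΩ'b hwcont hw2 hwlap hwbd
  constructor
  · intro x hx
    have := hwnn x hx
    simp only [hw] at this
    linarith
  · -- strict part
    intro hne x hx
    by_contra hle
    push_neg at hle
    have hwx : w x = 0 := by
      have h1 := hwnn x (subset_closure hx)
      simp only [hw] at h1 ⊢
      linarith
    have hwzero : ∀ y ∈ Ω', w y = 0 :=
      harmonic_eqzero hΩ' hΩ'b hΩ'conn.isPreconnected hw2 hwlap
        (fun y hy => hwnn y (subset_closure hy)) hx hwx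
    -- w = 0 on the closure of Ω'
    have hwzerocl : ∀ y ∈ closure Ω', w y = 0 := by
      have heq : Set.EqOn w (fun _ => (0:ℝ)) (closure Ω') :=
        Set.EqOn.of_subset_closure (fun y hy => hwzero y hy) hwcont continuousOn_const
          subset_closure subset_rfl
      exact fun y hy => heq hy
    -- frontier Ω' meets Ω
    have hfront : (frontier Ω' ∩ Ω).Nonempty := by
      by_contra hempty
      rw [Set.not_nonempty_iff_eq_empty] at hempty
      have hkey : ∀ y ∈ Ω, y ∈ closure Ω' → y ∈ Ω' := by
        intro y hy hyc
        rcases (closure_eq_interior_union_frontier Ω' ▸ hyc) with h | h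
        · rwa [hΩ'.interior_eq] at h
        · exact absurd (Set.mem_inter h hy) (by rw [hempty]; exact Set.notMem_empty y)
      obtain ⟨x0, hx0Ω, hx0n⟩ : ∃ x0 ∈ Ω, x0 ∉ Ω' := by
        by_contra hno
        push_neg at hno
        exact hne (Set.Subset.antisymm hsub hno)
      obtain ⟨y, hy⟩ := hΩconn.isPreconnected Ω' (closure Ω')ᶜ hΩ' isClosed_closure.isOpen_compl
        (fun q hq => by
          by_cases h : q ∈ closure Ω'
          · exact Or.inl (hkey q hq h)
          · exact Or.inr h)
        ⟨hΩ'ne.some, hsub hΩ'ne.some_mem, hΩ'ne.some_mem⟩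
        ⟨x0, hx0Ω, fun h => hx0n (hkey x0 hx0Ω h)⟩
      exact hy.2.2 (subset_closure hy.2.1)
    obtain ⟨q, hqf, hqΩ⟩ := hfront
    have h1 : w q = 0 := hwzerocl q (frontier_subset_closure hqf)
    have h2 : c q = 0 := hc.bdry q hqf
    have h3 : 0 < u q := hupos q hqΩ
    simp only [hw, h2, sub_zero] at h1
    linarith
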